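/- Let X be a finite set of alternatives, k ≥ 1 an integer, and (𝓑 = {B₁, …, Bₙ}, c) a finite data set that is rationalizable with k-th order CLA. Then for every x ∈ X there exists a lower-contour solution for x; in particular, for any rationalizing pair (≻, Γ), taking Aᵢ = Γ(Bᵢ), u : X → ℝ any utility representation of ≻, and s the indicator function of {x} ∪ {y ∈ X : x ≻ y} yields a lower-contour solution for x. -/

import Mathlib

/-- A strict preference relation: complete on distinct elements, transitive, asymmetric. -/
def StrictPref {X : Type*} (r : X → X → Prop) : Prop :=
  (∀ x y : X, x ≠ y → r x y ∨ r y x) ∧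
  (∀ x y z : X, r x y → r y z → r x z) ∧
  (∀ x y : X, r x y → ¬ r y x)

/-- An attention filter: for every nonempty budget `B`, `Γ B` is a nonempty subset of `B`,
and removing an unconsidered alternative does not change the consideration set. -/
def AttentionFilter {X : Type*} [DecidableEq X] (Γ : Finset X → Finset X) : Prop :=
  ∀ B : Finset X, B.Nonempty →
    (Γ B).Nonempty ∧ Γ B ⊆ B ∧ ∀ x ∈ B, x ∉ Γ B → Γ (B.erase x) = Γ B

/-- `(r, Γ)` is a rationalizing pair for the data set `(𝓑, c)` with `k`-th order CLA. -/
def Rationalizes {X : Type*} [DecidableEq X] (𝓑 : Set (Finset X)) (c : Finset X → X)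
    (k : ℕ) (r : X → X → Prop) (Γ : Finset X → Finset X) : Prop :=
  StrictPref r ∧ AttentionFilter Γ ∧
  (∀ B : Finset X, B.Nonempty → min B.card k ≤ (Γ B).card) ∧
  ∀ B ∈ 𝓑, c B ∈ Γ B ∧ ∀ y ∈ Γ B, y ≠ c B → r (c B) y

/-- The data set `(𝓑, c)` is rationalizable with `k`-th order CLA. -/
def RationalizableCLA {X : Type*} [DecidableEq X] (𝓑 : Set (Finset X))
    (c : Finset X → X) (k : ℕ) : Prop :=
  ∃ (r : X → X → Prop) (Γ : Finset X → Finset X), Rationalizes 𝓑 c k r Γ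

/-- A feasible configuration for the finite data set `(B₁, …, Bₙ, c)` and threshold `k`
(the big-M-free formulation of the mixed integer program, with `A i = {x_j : δ i j = 1}`). -/
def FeasibleConfig {X : Type*} [DecidableEq X] {n : ℕ} (B : Fin n → Finset X)
    (c : Finset X → X) (k : ℕ) (u : X → ℝ) (A : Fin n → Finset X) : Prop :=
  (∀ i, c (B i) ∈ A i) ∧ (∀ i, A i ⊆ B i) ∧
  (∀ i, ∀ y ∈ A i, y ≠ c (B i) → u y < u (c (B i))) ∧
  (∀ i, min k (B i).card ≤ (A i).card) ∧
  (∀ i j, c (B i) ≠ c (B j) → c (B i) ∈ B i ∩ B j → c (B j) ∈ B i ∩ B j →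
    (A i ∩ (B i \ B j)).Nonempty ∨ (A j ∩ (B j \ B i)).Nonempty)

/-- A lower-contour solution for the distinguished alternative `x`:
a feasible configuration together with an indicator `s` with `s x` and such that
considered alternatives inherit membership from the choice. -/
def LowerContourSol {X : Type*} [DecidableEq X] {n : ℕ} (B : Fin n → Finset X)
    (c : Finset X → X) (k : ℕ) (x : X) (u : X → ℝ) (A : Fin n → Finset X)
    (s : X → Prop) : Prop :=
  FeasibleConfig B c k u A ∧ s x ∧ ∀ i, ∀ y ∈ A i, s (c (B i)) → s y

lemma filter_stable {X : Type*} [DecidableEq X] {Γ : Finset X → Finset X}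
    (hAF : AttentionFilter Γ) :
    ∀ B : Finset X, ∀ S : Finset X, S ⊆ B → Γ B ⊆ S → B.Nonempty → Γ S = Γ B := by
  intro B
  induction B using Finset.strongInduction with
  | _ B ih =>
    intro S hSB hGS hBne
    by_cases h : S = B
    · rw [h]
    · obtain ⟨x, hxB, hxS⟩ := Finset.exists_of_ssubset (Finset.ssubset_iff_subset_ne.mpr ⟨hSB, h⟩)
      have hxΓ : x ∉ Γ B := fun hx => hxS (hGS hx)
      have he := (hAF B hBne).2.2 x hxB hxΓ
      have hsub : S ⊆ B.erase x := fun y hy =>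
        Finset.mem_erase.2 ⟨fun hh => hxS (hh ▸ hy), hSB hy⟩
      obtain ⟨z, hz⟩ := (hAF B hBne).1
      have hne : (B.erase x).Nonempty := ⟨z, hsub (hGS hz)⟩
      have := ih (B.erase x) (Finset.erase_ssubset hxB) S hsub (he ▸ hGS) hne
      rw [this, he]

theorem lowerContourSol_exists {X : Type*} [Fintype X] [DecidableEq X] {n : ℕ}
    (B : Fin n → Finset X) (c : Finset X → X) (k : ℕ) (hk : 1 ≤ k)
    (hchoice : ∀ i, c (B i) ∈ B i)
    (hrat : RationalizableCLA (Set.range B) c k) :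
    (∀ x : X, ∃ (u : X → ℝ) (A : Fin n → Finset X) (s : X → Prop),
        LowerContourSol B c k x u A s) ∧
    (∀ (x : X) (r : X → X → Prop) (Γ : Finset X → Finset X),
        Rationalizes (Set.range B) c k r Γ →
        ∀ u : X → ℝ, (∀ a b : X, r a b ↔ u b < u a) →
        LowerContourSol B c k x u (fun i => Γ (B i)) (fun y => y = x ∨ r x y))  := by
  have main : ∀ (x : X) (r : X → X → Prop) (Γ : Finset X → Finset X),
      Rationalizes (Set.range B) c k r Γ →
      ∀ u : X → ℝ, (∀ a b : X, r a b ↔ u b < u a) →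
      LowerContourSol B c k x u (fun i => Γ (B i)) (fun y => y = x ∨ r x y) := by
    intro x r Γ hR u hu
    obtain ⟨⟨hcomp, htrans, hasym⟩, hAF, hcard, hc⟩ := hR
    have hne : ∀ i, (B i).Nonempty := fun i => ⟨c (B i), hchoice i⟩
    have hmem : ∀ i, c (B i) ∈ Γ (B i) := fun i => (hc (B i) ⟨i, rfl⟩).1
    have hpref : ∀ i, ∀ y ∈ Γ (B i), y ≠ c (B i) → r (c (B i)) y :=
      fun i => (hc (B i) ⟨i, rfl⟩).2
    have hsub : ∀ i, Γ (B i) ⊆ B i := fun i => (hAF (B i) (hne i)).2.1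
    refine ⟨⟨hmem, hsub, ?_, ?_, ?_⟩, Or.inl rfl, ?_⟩
    · intro i y hy hyne
      exact (hu _ _).mp (hpref i y hy hyne)
    · intro i
      simpa [min_comm] using hcard (B i) (hne i)
    · intro i j hcne hci hcj
      by_contra hcon
      push_neg at hcon
      obtain ⟨h1, h2⟩ := hcon
      have hGi : Γ (B i) ⊆ B i ∩ B j := by
        intro y hy
        refine Finset.mem_inter.mpr ⟨hsub i hy, ?_⟩
        by_contra hyj
        exact Finset.notMem_empty y
          (h1 ▸ Finset.mem_inter.mpr ⟨hy, Finset.mem_sdiff.mpr ⟨hsub i hy, hyj⟩⟩)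
      have hGj : Γ (B j) ⊆ B i ∩ B j := by
        intro y hy
        refine Finset.mem_inter.mpr ⟨?_, hsub j hy⟩
        by_contra hyi
        exact Finset.notMem_empty y
          (h2 ▸ Finset.mem_inter.mpr ⟨hy, Finset.mem_sdiff.mpr ⟨hsub j hy, hyi⟩⟩)
      have hEi := filter_stable hAF (B i) (B i ∩ B j) Finset.inter_subset_left hGi (hne i)
      have hEj := filter_stable hAF (B j) (B i ∩ B j) Finset.inter_subset_right hGj (hne j)
      have heq : Γ (B i) = Γ (B j) := hEi.symm.trans hEj
      have h3 : r (c (B i)) (c (B j)) := hpref i _ (heq ▸ hmem j) (Ne.symm hcne)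
      have h4 : r (c (B j)) (c (B i)) := hpref j _ (heq ▸ hmem i) hcne
      exact hasym _ _ h3 h4
    · intro i y hy hs
      rcases hs with hs | hs
      · by_cases hyc : y = c (B i)
        · exact Or.inl (hyc.trans hs)
        · exact Or.inr (hs ▸ hpref i y hy hyc)
      · by_cases hyc : y = c (B i)
        · exact Or.inr (hyc ▸ hs)
        · exact Or.inr (htrans _ _ _ hs (hpref i y hy hyc))
  constructor
  · intro x
    obtain ⟨r, Γ, hR⟩ := hrat
    classical
    set u : X → ℝ := fun a => ((Finset.univ.filter (fun y => r a y)).card : ℝ) with hudef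
    have hirr : ∀ a, ¬ r a a := fun a ha => hR.1.2.2 a a ha ha
    have hu : ∀ a b : X, r a b ↔ u b < u a := by
      intro a b
      constructor
      · intro hab
        have hss : Finset.univ.filter (fun y => r b y) ⊂ Finset.univ.filter (fun y => r a y) := by
          refine Finset.ssubset_iff_of_subset ?_ |>.mpr ⟨b, ?_, ?_⟩
          · intro y hy
            simp only [Finset.mem_filter, Finset.mem_univ, true_and] at *
            exact hR.1.2.1 _ _ _ hab hy
          · simp [hab]
          · simp [hirr b]
        simp only [hudef]
        exact_mod_cast Finset.card_lt_card hss
      · intro hlt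
        by_cases hab : a = b
        · exact absurd hlt (hab ▸ lt_irrefl _)
        · rcases hR.1.1 a b hab with h | h
          · exact h
          · have : Finset.univ.filter (fun y => r a y) ⊂ Finset.univ.filter (fun y => r b y) := by
              refine Finset.ssubset_iff_of_subset ?_ |>.mpr ⟨a, ?_, ?_⟩
              · intro y hy
                simp only [Finset.mem_filter, Finset.mem_univ, true_and] at *
                exact hR.1.2.1 _ _ _ h hy
              · simp [h]
              · simp [hirr a]
            have hba : u a < u b := by
              simp only [hudef]
              exact_mod_cast Finset.card_lt_card this
            exact absurd hlt (not_lt.mpr hba.le)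
    exact ⟨u, _, _, main x r Γ hR u hu⟩
  · exact main
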